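/- Let n ≥ 2 be an integer, let f ∈ PL_n(ℝ) satisfy φ_n(f(x)) = φ_n(x) for all x ∈ ℤ[1/n] (i.e., d_n(f) = 0), and let a < b be real numbers. Then there exists g ∈ BPL_n(ℝ) that agrees with f on the interval [a, b]. -/

import Mathlib

noncomputable section

/-- `ℤ[1/n]` realized as a subset of `ℝ`: all reals of the form `a * n^b` with `a b : ℤ`. -/
def zpows (n : ℕ) : Set ℝ := {x : ℝ | ∃ a b : ℤ, x = (a : ℝ) * (n : ℝ) ^ b}

/-- The defining properties of the (unique) ring homomorphism `φₙ : ℤ[1/n] → ℤ/(n-1)ℤ`,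
expressed for a function `φ : ℝ → ZMod (n-1)` restricted to the subset `zpows n`. -/
def IsPhi (n : ℕ) (φ : ℝ → ZMod (n - 1)) : Prop :=
  (∀ x ∈ zpows n, ∀ y ∈ zpows n, φ (x + y) = φ x + φ y) ∧
  (∀ x ∈ zpows n, ∀ y ∈ zpows n, φ (x * y) = φ x * φ y) ∧
  φ 1 = 1

/-- `B` is a discrete subset of `ℝ`: every point of `ℝ` has a neighborhood containing
at most one point of `B`. -/
def LocDiscrete (B : Set ℝ) : Prop := ∀ x : ℝ, ∃ ε > 0, ∀ y ∈ B, |y - x| < ε → y = x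

/-- Membership in `PLₙ(ℝ)`: an orientation-preserving homeomorphism of `ℝ`
(equivalently, a strictly monotone surjection), piecewise linear with breaks in a
discrete subset of `ℤ[1/n]`, all slopes integral powers of `n`, and mapping `ℤ[1/n]`
into itself. -/
def MemPL (n : ℕ) (f : ℝ → ℝ) : Prop :=
  StrictMono f ∧ Function.Surjective f ∧
  (∃ B : Set ℝ, B ⊆ zpows n ∧ LocDiscrete B ∧
    ∀ x ∉ B, ∃ (k : ℤ) (c : ℝ), ∃ ε > 0, ∀ y : ℝ, |y - x| < ε → f y = (n : ℝ) ^ k * y + c) ∧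
  (∀ q ∈ zpows n, f q ∈ zpows n)

/-- Membership in `BPLₙ(ℝ)`: elements of `PLₙ(ℝ)` with bounded support. -/
def MemBPL (n : ℕ) (f : ℝ → ℝ) : Prop :=
  MemPL n f ∧ ∃ M : ℝ, ∀ x : ℝ, M < |x| → f x = x

namespace Stmt6

variable {n : ℕ}

lemma npos (hn : 2 ≤ n) : (0:ℝ) < (n:ℝ) := by positivity

lemma nne (hn : 2 ≤ n) : ((n:ℝ)) ≠ 0 := by positivity

lemma none' (hn : 2 ≤ n) : (1:ℝ) < (n:ℝ) := by exact_mod_cast Nat.one_lt_two.trans_le hn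

lemma zpows_int (m : ℤ) : (m:ℝ) ∈ zpows n := ⟨m, 0, by simp⟩

lemma zpows_zero : (0:ℝ) ∈ zpows n := by exact_mod_cast zpows_int 0

lemma zpows_one : (1:ℝ) ∈ zpows n := by exact_mod_cast zpows_int 1

lemma zpows_nat : ((n:ℝ)) ∈ zpows n := by exact_mod_cast zpows_int n

lemma zpows_zpow (hn : 2 ≤ n) (k : ℤ) : (n:ℝ) ^ k ∈ zpows n := ⟨1, k, by simp⟩

lemma zpows_mul (hn : 2 ≤ n) {x y : ℝ} (hx : x ∈ zpows n) (hy : y ∈ zpows n) : x * y ∈ zpows n := by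
  obtain ⟨a, b, rfl⟩ := hx
  obtain ⟨a', b', rfl⟩ := hy
  refine ⟨a * a', b + b', ?_⟩
  push_cast
  rw [zpow_add₀]
  · ring
  · exact nne hn

lemma zpows_neg {x : ℝ} (hx : x ∈ zpows n) : -x ∈ zpows n := by
  obtain ⟨a, b, rfl⟩ := hx
  exact ⟨-a, b, by push_cast; ring⟩

lemma zpows_add (hn : 2 ≤ n) {x y : ℝ} (hx : x ∈ zpows n) (hy : y ∈ zpows n) :
    x + y ∈ zpows n := by
  obtain ⟨a, b, rfl⟩ := hx
  obtain ⟨a', b', rfl⟩ := hy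
  set m := min b b' with hm
  refine ⟨a * n ^ (b - m).toNat + a' * n ^ (b' - m).toNat, m, ?_⟩
  have h1 : ((b - m).toNat : ℤ) = b - m := Int.toNat_of_nonneg (by omega)
  have h2 : ((b' - m).toNat : ℤ) = b' - m := Int.toNat_of_nonneg (by omega)
  have hne : ((n:ℝ)) ≠ 0 := nne hn
  push_cast
  rw [← zpow_natCast (n:ℝ) (b - m).toNat, ← zpow_natCast (n:ℝ) (b' - m).toNat, h1, h2]
  rw [add_mul, mul_assoc, mul_assoc, ← zpow_add₀ hne, ← zpow_add₀ hne]
  ring_nf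

lemma zpows_sub (hn : 2 ≤ n) {x y : ℝ} (hx : x ∈ zpows n) (hy : y ∈ zpows n) :
    x - y ∈ zpows n := by
  rw [sub_eq_add_neg]; exact zpows_add hn hx (zpows_neg hy)

/-! Gluing strict monotonicity -/

lemma sm_glue_Ici {g : ℝ → ℝ} {a b : ℝ} (hab : a ≤ b) (h1 : StrictMonoOn g (Set.Icc a b))
    (h2 : StrictMonoOn g (Set.Ici b)) : StrictMonoOn g (Set.Ici a) := by
  intro x hx y hy hxy
  rcases le_total y b with hyb | hyb
  · exact h1 ⟨hx, hxy.le.trans hyb⟩ ⟨hy, hyb⟩ hxy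
  · rcases le_total x b with hxb | hxb
    · rcases eq_or_lt_of_le hxb with rfl | hxb'
      · exact h2 Set.self_mem_Ici hyb hxy
      · calc g x < g b := h1 ⟨hx, hxb⟩ ⟨hab, le_refl _⟩ hxb'
          _ ≤ g y := h2.monotoneOn Set.self_mem_Ici hyb hyb
    · exact h2 hxb (hxb.trans hxy.le) hxy

lemma sm_glue {g : ℝ → ℝ} {a : ℝ} (h1 : StrictMonoOn g (Set.Iic a))
    (h2 : StrictMonoOn g (Set.Ici a)) : StrictMono g := by
  intro x y hxy
  rcases le_total y a with hya | hya
  · exact h1 (hxy.le.trans hya) hya hxy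
  · rcases le_total x a with hxa | hxa
    · rcases eq_or_lt_of_le hxa with rfl | hxa'
      · exact h2 Set.self_mem_Ici hya hxy
      · calc g x < g a := h1 hxa Set.self_mem_Iic hxa'
          _ ≤ g y := h2.monotoneOn Set.self_mem_Ici hya hya
    · exact h2 hxa (hxa.trans hxy.le) hxy

/-! The basic stretching maps -/

variable (n) in
/-- `vv t` : identity-slope far right becomes `y + t(n-1)`; slope `n^t` near `-∞`. -/
def vv : ℕ → ℝ → ℝ
  | 0 => id
  | (t+1) => fun y => if y ≤ (n:ℝ)⁻¹ then vv t (n * y)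
      else if y ≤ 1 then n * y + t * ((n:ℝ) - 1) else y + (t+1) * ((n:ℝ) - 1)

lemma vv_zero (t : ℕ) : vv n t 0 = 0 := by
  induction t with
  | zero => rfl
  | succ t ih =>
      have : (0:ℝ) ≤ (n:ℝ)⁻¹ := by positivity
      simp only [vv, this, if_pos, mul_zero, ih]

lemma vv_ge (hn : 2 ≤ n) {t : ℕ} {y : ℝ} (hy : 1 ≤ y) : vv n t y = y + t * ((n:ℝ) - 1) := by
  induction t with
  | zero => simp [vv]
  | succ t ih =>
      have h1 : (1:ℝ) < n := none' hn
      have hinv : (n:ℝ)⁻¹ < 1 := by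
        rw [inv_lt_one_iff₀]; right; exact h1
      have : ¬ y ≤ (n:ℝ)⁻¹ := by linarith
      simp only [vv, this, if_neg, not_false_iff]
      rcases le_or_gt y 1 with h | h
      · have : y = 1 := le_antisymm h hy
        subst this
        rw [if_pos (le_refl _)]
        push_cast; ring
      · rw [if_neg (not_le.mpr h)]; push_cast; ring

lemma vv_strictMono (hn : 2 ≤ n) (t : ℕ) : StrictMono (vv n t) := by
  induction t with
  | zero => exact fun x y h => h
  | succ t ih =>
      have h1 : (1:ℝ) < n := none' hn
      have h0 : (0:ℝ) < n := by linarith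
      have hinv : (n:ℝ)⁻¹ < 1 := by rw [inv_lt_one_iff₀]; right; exact h1
      apply sm_glue (a := (n:ℝ)⁻¹)
      · intro x hx y hy hxy
        simp only [Set.mem_Iic] at hx hy
        simp only [vv, if_pos hx, if_pos hy]
        exact ih (by nlinarith)
      · apply sm_glue_Ici hinv.le
        · intro x hx y hy hxy
          simp only [Set.mem_Icc] at hx hy
          have ex : vv n (t+1) x = n * x + t * ((n:ℝ) - 1) := by
            rcases eq_or_lt_of_le hx.1 with rfl | hx'
            · have hne : ((n:ℝ)) ≠ 0 := by linarith
              simp only [vv, if_pos (le_refl _)]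
              rw [mul_inv_cancel₀ hne, vv_ge hn (le_refl 1)]
            · simp only [vv, if_neg (not_le.mpr hx'), if_pos hx.2]
          have ey : vv n (t+1) y = n * y + t * ((n:ℝ) - 1) := by
            rcases eq_or_lt_of_le hy.1 with rfl | hy'
            · have hne : ((n:ℝ)) ≠ 0 := by linarith
              simp only [vv, if_pos (le_refl _)]
              rw [mul_inv_cancel₀ hne, vv_ge hn (le_refl 1)]
            · simp only [vv, if_neg (not_le.mpr hy'), if_pos hy.2]
          rw [ex, ey]
          nlinarith
        · intro x hx y hy hxy
          simp only [Set.mem_Ici] at hx hy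
          rw [vv_ge hn hx, vv_ge hn hy]
          linarith

lemma vv_continuous (hn : 2 ≤ n) (t : ℕ) : Continuous (vv n t) := by
  induction t with
  | zero => exact continuous_id
  | succ t ih =>
      have h1 : (1:ℝ) < n := none' hn
      have hne : ((n:ℝ)) ≠ 0 := by linarith
      have inner : Continuous fun y : ℝ =>
          if y ≤ 1 then (n:ℝ) * y + t * ((n:ℝ) - 1) else y + (t+1) * ((n:ℝ) - 1) := by
        apply Continuous.if_le (by continuity) (by continuity) continuous_id continuous_const
        intro x hx; subst hx; push_cast; ring
      show Continuous fun y : ℝ => if y ≤ (n:ℝ)⁻¹ then vv n t (n * y)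
        else if y ≤ 1 then (n:ℝ) * y + t * ((n:ℝ) - 1) else y + (t+1) * ((n:ℝ) - 1)
      apply Continuous.if_le (ih.comp (by continuity)) inner continuous_id continuous_const
      intro x hx; subst hx
      have hinv : (n:ℝ)⁻¹ ≤ 1 := by
        rw [inv_le_one_iff₀]; right; linarith
      simp only [Function.comp_apply]
      rw [mul_inv_cancel₀ hne, vv_ge hn (le_refl 1), if_pos hinv]

lemma zpows_tmul (hn : 2 ≤ n) (t : ℕ) : ((t:ℝ)) * ((n:ℝ) - 1) ∈ zpows n := by
  have : ((t:ℝ)) * ((n:ℝ) - 1) = (((t * (n - 1) : ℤ)) : ℝ) := by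
    push_cast; ring
  rw [this]; exact zpows_int _

lemma vv_zpows (hn : 2 ≤ n) (t : ℕ) {x : ℝ} (hx : x ∈ zpows n) : vv n t x ∈ zpows n := by
  induction t generalizing x with
  | zero => exact hx
  | succ t ih =>
      show (if x ≤ (n:ℝ)⁻¹ then vv n t ((n:ℝ) * x)
        else if x ≤ 1 then (n:ℝ) * x + t * ((n:ℝ) - 1) else x + (t+1) * ((n:ℝ) - 1)) ∈ zpows n
      have hnx : (n:ℝ) * x ∈ zpows n := zpows_mul hn zpows_nat hx
      split_ifs with h1 h2
      · exact ih hnx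
      · exact zpows_add hn hnx (zpows_tmul hn t)
      · have : x + ((t:ℝ)+1) * ((n:ℝ) - 1) = x + ((t+1 : ℕ):ℝ) * ((n:ℝ) - 1) := by push_cast; ring
        rw [this]
        exact zpows_add hn hx (zpows_tmul hn (t+1))

lemma vv_breaks (hn : 2 ≤ n) (t : ℕ) :
    ∃ F : Finset ℝ, (↑F : Set ℝ) ⊆ zpows n ∧
      ∀ x ∉ F, ∃ (k : ℤ) (c : ℝ), ∃ ε > 0, ∀ y : ℝ, |y - x| < ε →
        vv n t y = (n:ℝ) ^ k * y + c := by
  have h1 : (1:ℝ) < n := none' hn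
  have h0 : (0:ℝ) < n := by linarith
  have hne : ((n:ℝ)) ≠ 0 := by linarith
  have hinv1 : (n:ℝ)⁻¹ < 1 := by rw [inv_lt_one_iff₀]; right; exact h1
  induction t with
  | zero =>
      refine ⟨∅, by simp, fun x _ => ⟨0, 0, 1, one_pos, fun y _ => by simp [vv]⟩⟩
  | succ t ih =>
      obtain ⟨F, hFz, hFlin⟩ := ih
      refine ⟨insert ((n:ℝ)⁻¹) (insert 1 (F.image (· / (n:ℝ)))), ?_, ?_⟩
      · intro z hz
        simp only [Finset.coe_insert, Set.mem_insert_iff, Finset.coe_image,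
          Set.mem_image, Finset.mem_coe] at hz
        rcases hz with rfl | rfl | ⟨w, hw, rfl⟩
        · have : ((n:ℝ))⁻¹ = (n:ℝ) ^ (-1 : ℤ) := by simp
          rw [this]; exact zpows_zpow hn _
        · exact zpows_one
        · have : w / (n:ℝ) = w * (n:ℝ) ^ (-1 : ℤ) := by
            rw [zpow_neg_one]; ring
          rw [this]
          exact zpows_mul hn (hFz hw) (zpows_zpow hn _)
      · intro x hx
        simp only [Finset.mem_insert, Finset.mem_image, not_or, not_exists] at hx
        obtain ⟨hx1, hx2, hx3⟩ := hx
        rcases lt_trichotomy x ((n:ℝ)⁻¹) with hlt | heq | hgt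
        · -- left region : vv (t+1) y = vv t (n y)
          have hnx : (n:ℝ) * x ∉ F := by
            intro hmem
            exact hx3 ((n:ℝ) * x) ⟨hmem, by field_simp⟩
          obtain ⟨k, c, ε, hε, hlin⟩ := hFlin _ hnx
          refine ⟨k + 1, c, min (ε / n) ((n:ℝ)⁻¹ - x), lt_min (by positivity) (by linarith), fun y hy => ?_⟩
          have hy1 : |y - x| < ε / n := lt_of_lt_of_le hy (min_le_left _ _)
          have hy2 : |y - x| < (n:ℝ)⁻¹ - x := lt_of_lt_of_le hy (min_le_right _ _)
          have hyle : y ≤ (n:ℝ)⁻¹ := by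
            have := abs_lt.mp hy2
            linarith [this.2]
          have harg : |(n:ℝ) * y - (n:ℝ) * x| < ε := by
            rw [← mul_sub, abs_mul, abs_of_pos h0]
            calc (n:ℝ) * |y - x| < n * (ε / n) := by
                  exact mul_lt_mul_of_pos_left hy1 h0
              _ = ε := by field_simp
          show (if y ≤ (n:ℝ)⁻¹ then vv n t ((n:ℝ) * y) else _) = _
          rw [if_pos hyle, hlin _ harg, zpow_add₀ hne, zpow_one]
          ring
        · exact absurd heq hx1
        · rcases lt_trichotomy x 1 with hlt1 | heq1 | hgt1
          · refine ⟨1, t * ((n:ℝ) - 1), min (x - (n:ℝ)⁻¹) (1 - x), by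
              apply lt_min <;> linarith, fun y hy => ?_⟩
            have hy1 := abs_lt.mp (lt_of_lt_of_le hy (min_le_left _ _))
            have hy2 := abs_lt.mp (lt_of_lt_of_le hy (min_le_right _ _))
            show (if y ≤ (n:ℝ)⁻¹ then vv n t ((n:ℝ) * y) else if y ≤ 1 then _ else _) = _
            rw [if_neg (by linarith [hy1.1]), if_pos (by linarith [hy2.2]), zpow_one]
          · exact absurd heq1 hx2
          · refine ⟨0, (t+1) * ((n:ℝ) - 1), x - 1, by linarith, fun y hy => ?_⟩
            have hy1 := abs_lt.mp hy
            have hygt : 1 < y := by linarith [hy1.1]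
            show (if y ≤ (n:ℝ)⁻¹ then vv n t ((n:ℝ) * y) else if y ≤ 1 then _ else _) = _
            rw [if_neg (by linarith), if_neg (by linarith), zpow_zero]
            push_cast; ring

variable (n) in
/-- `ww t` : inverse-style map, `y - t(n-1)` far right; slope `n^{-t}` on `(-∞,1]`. -/
def ww : ℕ → ℝ → ℝ
  | 0 => id
  | (t+1) => fun y => if y ≤ 1 + (t+1) * ((n:ℝ) - 1) then ww t y / n else y - (t+1) * ((n:ℝ) - 1)

lemma ww_zero (hn : 2 ≤ n) (t : ℕ) : ww n t 0 = 0 := by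
  have h1 : (1:ℝ) < n := none' hn
  induction t with
  | zero => rfl
  | succ t ih =>
      have hpos : (0:ℝ) ≤ 1 + ((t:ℝ)+1) * ((n:ℝ) - 1) := by nlinarith [Nat.cast_nonneg (α := ℝ) t]
      show (if (0:ℝ) ≤ 1 + ((t:ℝ)+1) * ((n:ℝ) - 1) then ww n t 0 / n else _) = 0
      rw [if_pos hpos, ih, zero_div]

lemma ww_ge (hn : 2 ≤ n) {t : ℕ} {y : ℝ} (hy : 1 + t * ((n:ℝ) - 1) ≤ y) :
    ww n t y = y - t * ((n:ℝ) - 1) := by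
  have h1 : (1:ℝ) < n := none' hn
  induction t generalizing y with
  | zero => simp [ww]
  | succ t ih =>
      push_cast at hy ⊢
      show (if y ≤ 1 + ((t:ℝ)+1) * ((n:ℝ) - 1) then ww n t y / n else y - ((t:ℝ)+1) * ((n:ℝ) - 1))
        = y - ((t:ℝ)+1) * ((n:ℝ) - 1)
      rcases le_or_gt y (1 + ((t:ℝ)+1) * ((n:ℝ) - 1)) with h | h
      · have hy' : y = 1 + ((t:ℝ)+1) * ((n:ℝ) - 1) := le_antisymm h hy
        rw [if_pos h]
        have : ww n t y = y - t * ((n:ℝ) - 1) := ih (by push_cast; nlinarith)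
        rw [this, hy']
        field_simp
        ring
      · rw [if_neg (not_le.mpr h)]

lemma ww_strictMono (hn : 2 ≤ n) (t : ℕ) : StrictMono (ww n t) := by
  have h1 : (1:ℝ) < n := none' hn
  induction t with
  | zero => exact fun x y h => h
  | succ t ih =>
      apply sm_glue (a := 1 + ((t:ℝ)+1) * ((n:ℝ) - 1))
      · intro x hx y hy hxy
        simp only [Set.mem_Iic] at hx hy
        show (if x ≤ _ then ww n t x / (n:ℝ) else _) < (if y ≤ _ then ww n t y / (n:ℝ) else _)
        rw [if_pos hx, if_pos hy]
        exact (div_lt_div_iff_of_pos_right (by linarith)).mpr (ih hxy)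
      · intro x hx y hy hxy
        simp only [Set.mem_Ici] at hx hy
        have ex : ww n (t+1) x = x - ((t:ℝ)+1) * ((n:ℝ) - 1) := by
          have := ww_ge hn (t := t+1) (y := x) (by push_cast; linarith)
          push_cast at this ⊢; linarith [this]
        have ey : ww n (t+1) y = y - ((t:ℝ)+1) * ((n:ℝ) - 1) := by
          have := ww_ge hn (t := t+1) (y := y) (by push_cast; linarith)
          push_cast at this ⊢; linarith [this]
        rw [ex, ey]; linarith

lemma ww_continuous (hn : 2 ≤ n) (t : ℕ) : Continuous (ww n t) := by
  have h1 : (1:ℝ) < n := none' hn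
  have hne : ((n:ℝ)) ≠ 0 := by linarith
  induction t with
  | zero => exact continuous_id
  | succ t ih =>
      show Continuous fun y : ℝ => if y ≤ 1 + ((t:ℝ)+1) * ((n:ℝ) - 1) then ww n t y / n
        else y - ((t:ℝ)+1) * ((n:ℝ) - 1)
      apply Continuous.if_le (ih.div_const n) (by continuity) continuous_id continuous_const
      intro x hx
      subst hx
      rw [ww_ge hn (by push_cast; nlinarith [Nat.cast_nonneg (α := ℝ) t])]
      push_cast
      field_simp
      ring

lemma ww_zpows (hn : 2 ≤ n) (t : ℕ) {x : ℝ} (hx : x ∈ zpows n) : ww n t x ∈ zpows n := by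
  induction t generalizing x with
  | zero => exact hx
  | succ t ih =>
      show (if x ≤ 1 + ((t:ℝ)+1) * ((n:ℝ) - 1) then ww n t x / n else x - ((t:ℝ)+1) * ((n:ℝ) - 1)) ∈ zpows n
      split_ifs with h
      · have : ww n t x / n = ww n t x * (n:ℝ) ^ (-1 : ℤ) := by
          rw [zpow_neg_one]; ring
        rw [this]
        exact zpows_mul hn (ih hx) (zpows_zpow hn _)
      · have : x - (((t:ℝ)+1):ℝ) * ((n:ℝ) - 1) = x - (((t+1) * (n-1) : ℕ):ℝ) := by
          push_cast [Nat.cast_sub (by omega : 1 ≤ n)]; ring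
        rw [this]
        exact zpows_sub hn hx (by exact_mod_cast zpows_int ((t+1) * (n-1) : ℕ))

lemma ww_breaks (hn : 2 ≤ n) (t : ℕ) :
    ∃ F : Finset ℝ, (↑F : Set ℝ) ⊆ zpows n ∧
      ∀ x ∉ F, ∃ (k : ℤ) (c : ℝ), ∃ ε > 0, ∀ y : ℝ, |y - x| < ε →
        ww n t y = (n:ℝ) ^ k * y + c := by
  have h1 : (1:ℝ) < n := none' hn
  have h0 : (0:ℝ) < n := by linarith
  have hne : ((n:ℝ)) ≠ 0 := by linarith
  induction t with
  | zero =>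
      refine ⟨∅, by simp, fun x _ => ⟨0, 0, 1, one_pos, fun y _ => by simp [ww]⟩⟩
  | succ t ih =>
      obtain ⟨F, hFz, hFlin⟩ := ih
      set thr : ℝ := 1 + ((t:ℝ)+1) * ((n:ℝ) - 1) with hthr
      have hthrz : thr ∈ zpows n := by
        have : thr = (((1 + (t+1) * (n-1) : ℕ)):ℝ) := by
          rw [hthr]; push_cast [Nat.cast_sub (by omega : 1 ≤ n)]; ring
        rw [this]; exact_mod_cast zpows_int _
      refine ⟨insert thr F, ?_, ?_⟩
      · intro z hz
        simp only [Finset.coe_insert, Set.mem_insert_iff, Finset.mem_coe] at hz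
        rcases hz with rfl | hz
        · exact hthrz
        · exact hFz hz
      · intro x hx
        simp only [Finset.mem_insert, not_or] at hx
        obtain ⟨hx1, hx2⟩ := hx
        rcases lt_trichotomy x thr with hlt | heq | hgt
        · obtain ⟨k, c, ε, hε, hlin⟩ := hFlin _ hx2
          refine ⟨k - 1, c / n, min ε (thr - x), lt_min hε (by linarith), fun y hy => ?_⟩
          have hy1 := lt_of_lt_of_le hy (min_le_left _ _)
          have hy2 := abs_lt.mp (lt_of_lt_of_le hy (min_le_right _ _))
          have hyle : y ≤ thr := by linarith [hy2.2]
          show (if y ≤ thr then ww n t y / n else _) = _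
          rw [if_pos hyle, hlin _ hy1, zpow_sub₀ hne, zpow_one]
          field_simp
        · exact absurd heq hx1
        · refine ⟨0, -(((t:ℝ)+1):ℝ) * ((n:ℝ) - 1), x - thr, by linarith, fun y hy => ?_⟩
          have hy1 := abs_lt.mp hy
          have : ¬ y ≤ thr := by push_neg; linarith [hy1.1]
          show (if y ≤ thr then ww n t y / n else _) = _
          rw [if_neg this, zpow_zero]
          ring

variable (n) in
def uu (t : ℤ) : ℝ → ℝ := if 0 ≤ t then vv n t.toNat else ww n (-t).toNat

lemma uu_zero (hn : 2 ≤ n) (t : ℤ) : uu n t 0 = 0 := by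
  unfold uu; split_ifs
  · exact vv_zero _
  · exact ww_zero hn _

lemma uu_strictMono (hn : 2 ≤ n) (t : ℤ) : StrictMono (uu n t) := by
  unfold uu; split_ifs
  · exact vv_strictMono hn _
  · exact ww_strictMono hn _

lemma uu_continuous (hn : 2 ≤ n) (t : ℤ) : Continuous (uu n t) := by
  unfold uu; split_ifs
  · exact vv_continuous hn _
  · exact ww_continuous hn _

lemma uu_zpows (hn : 2 ≤ n) (t : ℤ) {x : ℝ} (hx : x ∈ zpows n) : uu n t x ∈ zpows n := by
  unfold uu; split_ifs
  · exact vv_zpows hn _ hx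
  · exact ww_zpows hn _ hx

lemma uu_breaks (hn : 2 ≤ n) (t : ℤ) :
    ∃ F : Finset ℝ, (↑F : Set ℝ) ⊆ zpows n ∧
      ∀ x ∉ F, ∃ (k : ℤ) (c : ℝ), ∃ ε > 0, ∀ y : ℝ, |y - x| < ε →
        uu n t y = (n:ℝ) ^ k * y + c := by
  unfold uu; split_ifs
  · exact vv_breaks hn _
  · exact ww_breaks hn _

lemma uu_ge (hn : 2 ≤ n) (t : ℤ) {y : ℝ} (hy : 1 + (t.natAbs : ℝ) * ((n:ℝ) - 1) ≤ y) :
    uu n t y = y + (t : ℝ) * ((n:ℝ) - 1) := by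
  have h1 : (1:ℝ) < n := none' hn
  unfold uu; split_ifs with h
  · have hy1 : (1:ℝ) ≤ y := by nlinarith [Nat.cast_nonneg (α := ℝ) t.natAbs]
    rw [vv_ge hn hy1]
    congr 1
    have : ((t.toNat : ℝ)) = (t : ℝ) := by exact_mod_cast Int.toNat_of_nonneg h
    rw [this]
  · push_neg at h
    have habs : ((-t).toNat : ℝ) = (t.natAbs : ℝ) := by
      have h2 : (-t).toNat = t.natAbs := by omega
      rw [h2]
    rw [ww_ge hn (by rw [habs]; exact hy)]
    rw [habs]
    have : ((t.natAbs : ℝ)) = -(t:ℝ) := by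
      rw [Nat.cast_natAbs, abs_of_nonpos (by exact_mod_cast h.le)]
      push_cast; ring
    rw [this]; ring

section Phi

variable (hn : 2 ≤ n) {φ : ℝ → ZMod (n - 1)} (hφ : IsPhi n φ)
include hn hφ

lemma phi_zero : φ 0 = 0 := by
  have := hφ.1 0 zpows_zero 0 zpows_zero
  simp at this
  linear_combination this

lemma phi_neg {x : ℝ} (hx : x ∈ zpows n) : φ (-x) = - φ x := by
  have := hφ.1 x hx (-x) (zpows_neg hx)
  rw [add_neg_cancel, phi_zero hn hφ] at this
  linear_combination -this

lemma phi_nat (m : ℕ) : φ (m : ℝ) = (m : ZMod (n - 1)) := by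
  induction m with
  | zero => simpa using phi_zero hn hφ
  | succ m ih =>
      have := hφ.1 (m : ℝ) (by exact_mod_cast zpows_int m) 1 zpows_one
      push_cast
      rw [this, ih, hφ.2.2]

lemma phi_int (m : ℤ) : φ (m : ℝ) = (m : ZMod (n - 1)) := by
  rcases m with m | m
  · simpa using phi_nat hn hφ m
  · have : ((Int.negSucc m : ℤ) : ℝ) = -((m+1 : ℕ) : ℝ) := by push_cast; ring
    rw [this, phi_neg hn hφ (by exact_mod_cast zpows_int (m+1 : ℕ)), phi_nat hn hφ]
    push_cast
    ring

lemma phi_n : φ (n : ℝ) = 1 := by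
  rw [phi_nat hn hφ]
  have : n = (n - 1) + 1 := by omega
  rw [this]
  push_cast [ZMod.natCast_self]
  simp

lemma phi_npow (s : ℕ) : φ ((n : ℝ) ^ (s : ℕ)) = 1 := by
  induction s with
  | zero => simpa using hφ.2.2
  | succ s ih =>
      have := hφ.2.1 ((n:ℝ)^s) (by exact_mod_cast zpows_zpow hn s) (n:ℝ) zpows_nat
      rw [pow_succ, this, ih, phi_n hn hφ, one_mul]

lemma phi_npow_neg (s : ℕ) : φ ((n : ℝ) ^ (-(s:ℤ))) = 1 := by
  have hne : ((n:ℝ)) ≠ 0 := nne hn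
  have := hφ.2.1 ((n:ℝ)^(-(s:ℤ))) (zpows_zpow hn _) ((n:ℝ)^(s:ℕ)) (by exact_mod_cast zpows_zpow hn s)
  have hprod : (n:ℝ) ^ (-(s:ℤ)) * (n:ℝ) ^ (s:ℕ) = 1 := by
    rw [← zpow_natCast (n:ℝ) s, ← zpow_add₀ hne]
    simp
  rw [hprod, hφ.2.2, phi_npow hn hφ, mul_one] at this
  exact this.symm

/-- The key arithmetic step: an element of `ℤ[1/n]` in the kernel of `φ`
has the form `t (n-1) n^{-s}`. -/
lemma phi_ker_form {D : ℝ} (hD : D ∈ zpows n) (h0 : φ D = 0) :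
    ∃ (t : ℤ) (s : ℕ), D = (t : ℝ) * ((n:ℝ) - 1) * (n:ℝ) ^ (-(s:ℤ)) := by
  have hne : ((n:ℝ)) ≠ 0 := nne hn
  obtain ⟨a, bb, rfl⟩ := hD
  -- normalize to a * n^(-s) form
  obtain ⟨e, s, hes⟩ : ∃ (e : ℤ) (s : ℕ), (a:ℝ) * (n:ℝ) ^ bb = (e:ℝ) * (n:ℝ) ^ (-(s:ℤ)) := by
    rcases le_or_gt 0 bb with h | h
    · refine ⟨a * n ^ bb.toNat, 0, ?_⟩
      push_cast
      rw [← zpow_natCast (n:ℝ) bb.toNat, Int.toNat_of_nonneg h]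
      simp
    · exact ⟨a, (-bb).toNat, by rw [Int.toNat_of_nonneg (by omega)]; ring_nf⟩
  rw [hes] at h0 ⊢
  have hmul := hφ.2.1 (e:ℝ) (zpows_int e) ((n:ℝ) ^ (-(s:ℤ))) (zpows_zpow hn _)
  rw [hmul, phi_int hn hφ, phi_npow_neg hn hφ, mul_one] at h0
  have hdvd : ((n - 1 : ℕ) : ℤ) ∣ e := by
    rwa [← ZMod.intCast_zmod_eq_zero_iff_dvd]
  obtain ⟨t, ht⟩ := hdvd
  refine ⟨t, s, ?_⟩
  rw [ht]
  push_cast [Nat.cast_sub (by omega : 1 ≤ n)]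
  ring

end Phi

lemma locDiscrete_mono {B B' : Set ℝ} (h : B' ⊆ B) (hB : LocDiscrete B) : LocDiscrete B' :=
  fun x => by
    obtain ⟨ε, hε, hp⟩ := hB x
    exact ⟨ε, hε, fun y hy => hp y (h hy)⟩

lemma locDiscrete_union_finset {B : Set ℝ} (hB : LocDiscrete B) (F : Finset ℝ) :
    LocDiscrete (B ∪ ↑F) := by
  classical
  induction F using Finset.induction with
  | empty =>
      intro x
      obtain ⟨ε, hε, hp⟩ := hB x
      refine ⟨ε, hε, fun y hy h' => ?_⟩
      rcases hy with hy | hy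
      · exact hp y hy h'
      · simp at hy
  | @insert a F hnm ih =>
      intro x
      obtain ⟨ε, hε, hp⟩ := ih x
      by_cases hax : a = x
      · subst hax
        refine ⟨ε, hε, fun y hy h' => ?_⟩
        rcases hy with hy | hy
        · exact hp y (Or.inl hy) h'
        · simp only [Finset.coe_insert, Set.mem_insert_iff, Finset.mem_coe] at hy
          rcases hy with rfl | hy
          · rfl
          · exact hp y (Or.inr hy) h'
      · refine ⟨min ε |a - x|, lt_min hε (abs_pos.mpr (sub_ne_zero.mpr hax)), fun y hy h' => ?_⟩
        rcases hy with hy | hy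
        · exact hp y (Or.inl hy) (lt_of_lt_of_le h' (min_le_left _ _))
        · simp only [Finset.coe_insert, Set.mem_insert_iff, Finset.mem_coe] at hy
          rcases hy with rfl | hy
          · exact absurd (lt_of_lt_of_le h' (min_le_right _ _)) (lt_irrefl _)
          · exact hp y (Or.inr hy) (lt_of_lt_of_le h' (min_le_left _ _))

end Stmt6

set_option maxHeartbeats 1000000 in
open Stmt6 in
/-- If `f ∈ PLₙ(ℝ)` satisfies `φₙ(f x) = φₙ x` for all `x ∈ ℤ[1/n]`
(i.e. `dₙ(f) = 0`) and `a < b`, then some `g ∈ BPLₙ(ℝ)` agrees with `f` on `[a, b]`. -/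
theorem stmt_6 (n : ℕ) (hn : 2 ≤ n) (φ : ℝ → ZMod (n - 1)) (hφ : IsPhi n φ)
    (f : ℝ → ℝ) (hf : MemPL n f) (hker : ∀ x ∈ zpows n, φ (f x) = φ x)
    (a b : ℝ) (hab : a < b) :
    ∃ g : ℝ → ℝ, MemBPL n g ∧ ∀ x ∈ Set.Icc a b, g x = f x := by
  classical
  obtain ⟨hmono, hsurj, ⟨B, hBz, hBd, hBlin⟩, hzp⟩ := hf
  have h1 : (1:ℝ) < n := none' hn
  have h0 : (0:ℝ) < n := by linarith
  have hne : ((n:ℝ)) ≠ 0 := by linarith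
  -- continuity of f
  have fcont : Continuous f := by
    have hco : f = ⇑(StrictMono.orderIsoOfSurjective f hmono hsurj) :=
      (StrictMono.coe_orderIsoOfSurjective f hmono hsurj).symm
    rw [hco]
    exact OrderIso.continuous _
  -- endpoints
  set p : ℝ := ((⌊a⌋ : ℤ) : ℝ) with hp_def
  set q : ℝ := ((⌈b⌉ : ℤ) : ℝ) with hq_def
  have hpa : p ≤ a := Int.floor_le a
  have hbq : b ≤ q := Int.le_ceil b
  have hpq : p < q := by linarith
  have hpz : p ∈ zpows n := zpows_int _
  have hqz : q ∈ zpows n := zpows_int _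
  have hfpz : f p ∈ zpows n := hzp p hpz
  have hfqz : f q ∈ zpows n := hzp q hqz
  -- kernel elements
  have hDRz : q - f q ∈ zpows n := zpows_sub hn hqz hfqz
  have hDR0 : φ (q - f q) = 0 := by
    have h := hφ.1 q hqz (-(f q)) (zpows_neg hfqz)
    rw [phi_neg hn hφ hfqz, hker q hqz] at h
    rw [sub_eq_add_neg, h]
    ring
  obtain ⟨tR, sR, hR⟩ := phi_ker_form hn hφ hDRz hDR0
  have hDLz : f p - p ∈ zpows n := zpows_sub hn hfpz hpz
  have hDL0 : φ (f p - p) = 0 := by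
    have h := hφ.1 (f p) hfpz (-p) (zpows_neg hpz)
    rw [phi_neg hn hφ hpz, hker p hpz] at h
    rw [sub_eq_add_neg, h]
    ring
  obtain ⟨tL, sL, hL⟩ := phi_ker_form hn hφ hDLz hDL0
  -- scaling facts
  have keyR : (n:ℝ) ^ (-(sR:ℤ)) * (n:ℝ) ^ ((sR:ℤ)) = 1 := by
    rw [← zpow_add₀ hne]; simp
  have keyL : (n:ℝ) ^ (-(sL:ℤ)) * (n:ℝ) ^ ((sL:ℤ)) = 1 := by
    rw [← zpow_add₀ hne]; simp
  have cRpos : (0:ℝ) < (n:ℝ) ^ (-(sR:ℤ)) := zpow_pos h0 _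
  have cLpos : (0:ℝ) < (n:ℝ) ^ (-(sL:ℤ)) := zpow_pos h0 _
  have dRpos : (0:ℝ) < (n:ℝ) ^ ((sR:ℤ)) := zpow_pos h0 _
  have dLpos : (0:ℝ) < (n:ℝ) ^ ((sL:ℤ)) := zpow_pos h0 _
  -- the pieces
  set L : ℝ → ℝ := fun x => f p - (n:ℝ) ^ (-(sL:ℤ)) * uu n tL ((n:ℝ) ^ ((sL:ℤ)) * (p - x))
    with hLdef
  set R : ℝ → ℝ := fun x => f q + (n:ℝ) ^ (-(sR:ℤ)) * uu n tR ((n:ℝ) ^ ((sR:ℤ)) * (x - q))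
    with hRdef
  set g : ℝ → ℝ := fun x => if x ≤ p then L x else if x ≤ q then f x else R x with hgdef
  have hLp : L p = f p := by
    rw [hLdef]; simp [uu_zero hn]
  have hRq : R q = f q := by
    rw [hRdef]; simp [uu_zero hn]
  have g_eq_L : ∀ x ≤ p, g x = L x := by
    intro x hx; rw [hgdef]; simp only [if_pos hx]
  have g_eq_mid : ∀ x, p ≤ x → x ≤ q → g x = f x := by
    intro x hx1 hx2
    rw [hgdef]
    simp only
    rcases eq_or_lt_of_le hx1 with rfl | h
    · rw [if_pos le_rfl, hLp]
    · rw [if_neg (not_le.mpr h), if_pos hx2]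
  have g_eq_R : ∀ x, q ≤ x → g x = R x := by
    intro x hx
    rcases eq_or_lt_of_le hx with heq | h
    · rw [← heq, g_eq_mid q hpq.le le_rfl, hRq]
    · rw [hgdef]
      simp only
      rw [if_neg (not_le.mpr (hpq.trans h)), if_neg (not_le.mpr h)]
  -- identity thresholds
  set Qr : ℝ := q + (1 + (tR.natAbs : ℝ) * ((n:ℝ) - 1)) * (n:ℝ) ^ (-(sR:ℤ)) with hQr
  set Pl : ℝ := p - (1 + (tL.natAbs : ℝ) * ((n:ℝ) - 1)) * (n:ℝ) ^ (-(sL:ℤ)) with hPl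
  have hQrq : q < Qr := by
    have f1 : (0:ℝ) < 1 + (tR.natAbs : ℝ) * ((n:ℝ) - 1) := by
      nlinarith [Nat.cast_nonneg (α := ℝ) tR.natAbs]
    rw [hQr]
    linarith [mul_pos f1 cRpos]
  have hPlp : Pl < p := by
    have f1 : (0:ℝ) < 1 + (tL.natAbs : ℝ) * ((n:ℝ) - 1) := by
      nlinarith [Nat.cast_nonneg (α := ℝ) tL.natAbs]
    rw [hPl]
    linarith [mul_pos f1 cLpos]
  have hR_id : ∀ x, Qr ≤ x → R x = x := by
    intro x hx
    have harg : 1 + (tR.natAbs : ℝ) * ((n:ℝ) - 1) ≤ (n:ℝ) ^ ((sR:ℤ)) * (x - q) := by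
      have h2 : (1 + (tR.natAbs : ℝ) * ((n:ℝ) - 1)) * (n:ℝ) ^ (-(sR:ℤ)) ≤ x - q := by
        rw [hQr] at hx; linarith
      calc 1 + (tR.natAbs : ℝ) * ((n:ℝ) - 1)
          = (n:ℝ) ^ ((sR:ℤ)) * ((1 + (tR.natAbs : ℝ) * ((n:ℝ) - 1)) * (n:ℝ) ^ (-(sR:ℤ))) := by
            linear_combination (-(1 + (tR.natAbs : ℝ) * ((n:ℝ) - 1))) * keyR
        _ ≤ (n:ℝ) ^ ((sR:ℤ)) * (x - q) := by
            apply mul_le_mul_of_nonneg_left h2 dRpos.le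
    rw [hRdef]
    simp only
    rw [uu_ge hn tR harg]
    linear_combination (x - q) * keyR - hR
  have hL_id : ∀ x, x ≤ Pl → L x = x := by
    intro x hx
    have harg : 1 + (tL.natAbs : ℝ) * ((n:ℝ) - 1) ≤ (n:ℝ) ^ ((sL:ℤ)) * (p - x) := by
      have h2 : (1 + (tL.natAbs : ℝ) * ((n:ℝ) - 1)) * (n:ℝ) ^ (-(sL:ℤ)) ≤ p - x := by
        rw [hPl] at hx; linarith
      calc 1 + (tL.natAbs : ℝ) * ((n:ℝ) - 1)
          = (n:ℝ) ^ ((sL:ℤ)) * ((1 + (tL.natAbs : ℝ) * ((n:ℝ) - 1)) * (n:ℝ) ^ (-(sL:ℤ))) := by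
            linear_combination (-(1 + (tL.natAbs : ℝ) * ((n:ℝ) - 1))) * keyL
        _ ≤ (n:ℝ) ^ ((sL:ℤ)) * (p - x) := by
            apply mul_le_mul_of_nonneg_left h2 dLpos.le
    rw [hLdef]
    simp only
    rw [uu_ge hn tL harg]
    linear_combination -(p - x) * keyL + hL
  -- strict monotonicity
  have Lmono : ∀ x y : ℝ, x < y → L x < L y := by
    intro x y hxy
    rw [hLdef]
    simp only
    have harg : (n:ℝ) ^ ((sL:ℤ)) * (p - y) < (n:ℝ) ^ ((sL:ℤ)) * (p - x) :=
      mul_lt_mul_of_pos_left (by linarith) dLpos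
    exact sub_lt_sub_left (mul_lt_mul_of_pos_left (uu_strictMono hn tL harg) cLpos) _
  have Rmono : ∀ x y : ℝ, x < y → R x < R y := by
    intro x y hxy
    rw [hRdef]
    simp only
    have harg : (n:ℝ) ^ ((sR:ℤ)) * (x - q) < (n:ℝ) ^ ((sR:ℤ)) * (y - q) :=
      mul_lt_mul_of_pos_left (by linarith) dRpos
    exact add_lt_add_right (mul_lt_mul_of_pos_left (uu_strictMono hn tR harg) cRpos) _
  have gmono : StrictMono g := by
    apply sm_glue (a := p)
    · intro x hx y hy hxy
      rw [g_eq_L x hx, g_eq_L y hy]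
      exact Lmono x y hxy
    · apply sm_glue_Ici hpq.le
      · intro x hx y hy hxy
        rw [g_eq_mid x hx.1 hx.2, g_eq_mid y hy.1 hy.2]
        exact hmono hxy
      · intro x hx y hy hxy
        rw [g_eq_R x hx, g_eq_R y hy]
        exact Rmono x y hxy
  -- continuity
  have Lcont : Continuous L := by
    rw [hLdef]
    exact continuous_const.sub (continuous_const.mul
      ((uu_continuous hn tL).comp (continuous_const.mul (continuous_const.sub continuous_id))))
  have Rcont : Continuous R := by
    rw [hRdef]
    exact continuous_const.add (continuous_const.mul
      ((uu_continuous hn tR).comp (continuous_const.mul (continuous_id.sub continuous_const))))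
  have gcont : Continuous g := by
    rw [hgdef]
    have inner : Continuous fun x : ℝ => if x ≤ q then f x else R x := by
      apply Continuous.if_le fcont Rcont continuous_id continuous_const
      intro x hx
      subst hx
      exact hRq.symm
    apply Continuous.if_le Lcont inner continuous_id continuous_const
    intro x hx
    subst hx
    rw [if_pos hpq.le] at *
    exact hLp
  -- bounded support
  set M : ℝ := |Pl| + |Qr| with hM
  have hMn : ∀ x : ℝ, M < |x| → g x = x := by
    intro x hx
    rcases le_or_gt 0 x with hx0 | hx0
    · rw [abs_of_nonneg hx0] at hx
      have hxQ : Qr ≤ x := by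
        have h2 : Qr ≤ |Qr| := le_abs_self Qr
        have h3 : M ≥ |Qr| := by rw [hM]; linarith [abs_nonneg Pl]
        linarith
      rw [g_eq_R x (by linarith), hR_id x hxQ]
    · rw [abs_of_neg hx0] at hx
      have hxP : x ≤ Pl := by
        have h2 : -|Pl| ≤ Pl := neg_abs_le Pl
        have h3 : M ≥ |Pl| := by rw [hM]; linarith [abs_nonneg Qr]
        linarith
      rw [g_eq_L x (by linarith), hL_id x hxP]
  -- surjectivity
  have gsurj : Function.Surjective g := by
    intro y
    have hM0 : 0 ≤ M := by rw [hM]; positivity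
    set A : ℝ := min (-(M+1)) y with hA
    set Bb : ℝ := max (M+1) y with hBb
    have hAB : A ≤ Bb := le_trans (min_le_left _ _) (by
      have := le_max_left (M+1) y
      linarith)
    have hgA : g A = A := hMn A (by
      rw [abs_of_nonpos (le_trans (min_le_left _ _) (by linarith))]
      have := min_le_left (-(M+1)) y
      linarith)
    have hgB : g Bb = Bb := hMn Bb (by
      rw [abs_of_nonneg (le_trans (by linarith) (le_max_left (M+1) y))]
      have := le_max_left (M+1) y
      linarith)
    have hy : y ∈ Set.Icc (g A) (g Bb) := by
      rw [hgA, hgB]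
      exact ⟨min_le_right _ _, le_max_right _ _⟩
    obtain ⟨x, _, hxy⟩ := intermediate_value_Icc hAB gcont.continuousOn hy
    exact ⟨x, hxy⟩
  -- break set
  obtain ⟨FL, hFLz, hFLlin⟩ := uu_breaks hn tL
  obtain ⟨FR, hFRz, hFRlin⟩ := uu_breaks hn tR
  classical
  set Gl : Finset ℝ := FL.image (fun z => p - z * (n:ℝ) ^ (-(sL:ℤ))) with hGl
  set Gr : Finset ℝ := FR.image (fun z => q + z * (n:ℝ) ^ (-(sR:ℤ))) with hGr
  set Bg : Set ℝ := (B ∩ Set.Icc p q) ∪ ↑(insert p (insert q (Gl ∪ Gr))) with hBg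
  have hBgz : Bg ⊆ zpows n := by
    intro z hz
    rcases hz with ⟨hzB, _⟩ | hz
    · exact hBz hzB
    · simp only [hGl, hGr, Finset.coe_insert, Set.mem_insert_iff, Finset.mem_coe,
        Finset.mem_union, Finset.mem_image] at hz
      rcases hz with rfl | rfl | ⟨w, hw, rfl⟩ | ⟨w, hw, rfl⟩
      · exact hpz
      · exact hqz
      · exact zpows_sub hn hpz (zpows_mul hn (hFLz hw) (zpows_zpow hn _))
      · exact zpows_add hn hqz (zpows_mul hn (hFRz hw) (zpows_zpow hn _))
  have hBgd : LocDiscrete Bg :=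
    locDiscrete_union_finset (locDiscrete_mono Set.inter_subset_left hBd) _
  have hBglin : ∀ x ∉ Bg, ∃ (k : ℤ) (c : ℝ), ∃ ε > 0, ∀ y : ℝ, |y - x| < ε →
      g y = (n:ℝ) ^ k * y + c := by
    intro x hx
    have hxB : x ∈ Set.Icc p q → x ∉ B := fun hI hB' => hx (Or.inl ⟨hB', hI⟩)
    have hxF : x ∉ (↑(insert p (insert q (Gl ∪ Gr))) : Set ℝ) := fun h => hx (Or.inr h)
    simp only [hGl, hGr, Finset.coe_insert, Set.mem_insert_iff, Finset.mem_coe,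
      Finset.mem_union, Finset.mem_image, not_or, not_exists] at hxF
    obtain ⟨hxp, hxq, hxGlR⟩ := hxF
    rcases lt_trichotomy x p with hlt | heq | hgt
    · -- left tail
      set z : ℝ := (n:ℝ) ^ ((sL:ℤ)) * (p - x) with hz
      have hzFL : z ∉ FL := by
        intro hmem
        refine hxGlR.1 z ⟨hmem, ?_⟩
        rw [hz]
        linear_combination -(p - x) * keyL
      obtain ⟨k, c, ε, hε, hlin⟩ := hFLlin z hzFL
      refine ⟨k, f p - (n:ℝ) ^ (-(sL:ℤ)) * c - (n:ℝ) ^ k * p,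
        min (ε * (n:ℝ) ^ (-(sL:ℤ))) (p - x), lt_min (by positivity) (by linarith),
        fun y hy => ?_⟩
      have hy1 : |y - x| < ε * (n:ℝ) ^ (-(sL:ℤ)) := lt_of_lt_of_le hy (min_le_left _ _)
      have hy2 := abs_lt.mp (lt_of_lt_of_le hy (min_le_right _ _))
      have hyp : y ≤ p := by linarith [hy2.2]
      have hw : |(n:ℝ) ^ ((sL:ℤ)) * (p - y) - z| < ε := by
        have e1 : (n:ℝ) ^ ((sL:ℤ)) * (p - y) - z = (n:ℝ) ^ ((sL:ℤ)) * (x - y) := by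
          rw [hz]; ring
        rw [e1, abs_mul, abs_of_pos dLpos, abs_sub_comm]
        calc (n:ℝ) ^ ((sL:ℤ)) * |y - x| < (n:ℝ) ^ ((sL:ℤ)) * (ε * (n:ℝ) ^ (-(sL:ℤ))) :=
              mul_lt_mul_of_pos_left hy1 dLpos
          _ = ε := by linear_combination ε * keyL
      rw [g_eq_L y hyp, hLdef]
      simp only
      rw [hlin _ hw]
      linear_combination (-(n:ℝ) ^ k * (p - y)) * keyL
    · exact absurd heq hxp
    · rcases lt_trichotomy x q with hlt2 | heq2 | hgt2
      · -- middle
        have hxB' : x ∉ B := hxB ⟨hgt.le, hlt2.le⟩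
        obtain ⟨k, c, ε, hε, hlin⟩ := hBlin x hxB'
        refine ⟨k, c, min ε (min (x - p) (q - x)),
          lt_min hε (lt_min (by linarith) (by linarith)), fun y hy => ?_⟩
        have hy1 := lt_of_lt_of_le hy (min_le_left _ _)
        have hy2 := abs_lt.mp (lt_of_lt_of_le hy ((min_le_right _ _).trans (min_le_left _ _)))
        have hy3 := abs_lt.mp (lt_of_lt_of_le hy ((min_le_right _ _).trans (min_le_right _ _)))
        rw [g_eq_mid y (by linarith [hy2.1]) (by linarith [hy3.2])]
        exact hlin y hy1
      · exact absurd heq2 hxq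
      · -- right tail
        set z : ℝ := (n:ℝ) ^ ((sR:ℤ)) * (x - q) with hz
        have hzFR : z ∉ FR := by
          intro hmem
          refine hxGlR.2 z ⟨hmem, ?_⟩
          rw [hz]
          linear_combination (x - q) * keyR
        obtain ⟨k, c, ε, hε, hlin⟩ := hFRlin z hzFR
        refine ⟨k, f q + (n:ℝ) ^ (-(sR:ℤ)) * c - (n:ℝ) ^ k * q,
          min (ε * (n:ℝ) ^ (-(sR:ℤ))) (x - q), lt_min (by positivity) (by linarith),
          fun y hy => ?_⟩
        have hy1 : |y - x| < ε * (n:ℝ) ^ (-(sR:ℤ)) := lt_of_lt_of_le hy (min_le_left _ _)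
        have hy2 := abs_lt.mp (lt_of_lt_of_le hy (min_le_right _ _))
        have hyq : q ≤ y := by linarith [hy2.1]
        have hw : |(n:ℝ) ^ ((sR:ℤ)) * (y - q) - z| < ε := by
          have e1 : (n:ℝ) ^ ((sR:ℤ)) * (y - q) - z = (n:ℝ) ^ ((sR:ℤ)) * (y - x) := by
            rw [hz]; ring
          rw [e1, abs_mul, abs_of_pos dRpos]
          calc (n:ℝ) ^ ((sR:ℤ)) * |y - x| < (n:ℝ) ^ ((sR:ℤ)) * (ε * (n:ℝ) ^ (-(sR:ℤ))) :=
                mul_lt_mul_of_pos_left hy1 dRpos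
            _ = ε := by linear_combination ε * keyR
        rw [g_eq_R y hyq, hRdef]
        simp only
        rw [hlin _ hw]
        linear_combination ((n:ℝ) ^ k * (y - q)) * keyR
  have hgzp : ∀ x ∈ zpows n, g x ∈ zpows n := by
    intro x hx
    rcases le_or_gt x p with h | h
    · rw [g_eq_L x h, hLdef]
      exact zpows_sub hn hfpz (zpows_mul hn (zpows_zpow hn _)
        (uu_zpows hn tL (zpows_mul hn (zpows_zpow hn _) (zpows_sub hn hpz hx))))
    · rcases le_or_gt x q with h2 | h2
      · rw [g_eq_mid x h.le h2]
        exact hzp x hx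
      · rw [g_eq_R x h2.le, hRdef]
        exact zpows_add hn hfqz (zpows_mul hn (zpows_zpow hn _)
          (uu_zpows hn tR (zpows_mul hn (zpows_zpow hn _) (zpows_sub hn hx hqz))))
  refine ⟨g, ⟨⟨gmono, gsurj, ⟨Bg, hBgz, hBgd, hBglin⟩, hgzp⟩, M, hMn⟩, ?_⟩
  intro x hx
  rcases le_or_gt x p with h | h
  · have hxp : x = p := le_antisymm h (hpa.trans hx.1)
    rw [hxp, g_eq_mid p le_rfl hpq.le]
  · rw [g_eq_mid x h.le (hx.2.trans hbq)]
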